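/- arXiv:2103.08883 — 5 statements merged into one kernel-verified Lean document; each statement's English description precedes it below -/
import Mathlib

section
/- Let Λ be an Artin algebra and 0 → A →f→ B →g→ C → 0 an almost split sequence in mod Λ. Then the sequence 0 → (A →id→ A) → (A →f→ B) → (0 → C) → 0 in H(Λ), whose left map is the pair (id_A, f) and whose right map is the pair (0, g), is an almost split sequence in H(Λ) ending at (0 → C). -/
universe u

section Core

variable (Λ : Type u) [Ring Λ]

/-- A module is indecomposable: it is nonzero and admits no nontrivial direct sum
decomposition. -/
def IsIndecMod (M : Type u) [AddCommGroup M] [Module Λ M] : Prop :=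
  Nontrivial M ∧ ∀ N₁ N₂ : Submodule Λ M, IsCompl N₁ N₂ → N₁ = ⊥ ∨ N₂ = ⊥

/-- A linear map is a split epimorphism if it admits a section. -/
def IsSplitEpiMod {M N : Type u} [AddCommGroup M] [Module Λ M] [AddCommGroup N] [Module Λ N]
    (g : M →ₗ[Λ] N) : Prop :=
  ∃ s : N →ₗ[Λ] M, g ∘ₗ s = LinearMap.id

/-- A linear map is a split monomorphism if it admits a retraction. -/
def IsSplitMonoMod {M N : Type u} [AddCommGroup M] [Module Λ M] [AddCommGroup N] [Module Λ N]
    (f : M →ₗ[Λ] N) : Prop :=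
  ∃ r : N →ₗ[Λ] M, r ∘ₗ f = LinearMap.id

/-- `0 → A → B → C → 0` is an almost split (Auslander-Reiten) sequence in `mod Λ`. -/
structure IsAlmostSplitSeq {A B C : Type u} [AddCommGroup A] [Module Λ A]
    [AddCommGroup B] [Module Λ B] [AddCommGroup C] [Module Λ C]
    (f : A →ₗ[Λ] B) (g : B →ₗ[Λ] C) : Prop where
  finA : Module.Finite Λ A
  finB : Module.Finite Λ B
  finC : Module.Finite Λ C
  inj : Function.Injective f
  surj : Function.Surjective g
  exact : LinearMap.range f = LinearMap.ker g
  not_split : ¬ IsSplitEpiMod Λ g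
  indecA : IsIndecMod Λ A
  indecC : IsIndecMod Λ C
  lift : ∀ (X : Type u) [AddCommGroup X] [Module Λ X], Module.Finite Λ X →
    ∀ h : X →ₗ[Λ] C, ¬ IsSplitEpiMod Λ h → ∃ k : X →ₗ[Λ] B, g ∘ₗ k = h

/-- `N ≅ τ M`, expressed through the defining property of the Auslander-Reiten
translation: `N` is the starting term of an almost split sequence ending at `M`. -/
def IsARTranslateOf (N M : Type u) [AddCommGroup N] [Module Λ N]
    [AddCommGroup M] [Module Λ M] : Prop :=
  ∃ (B : Type u) (_ : AddCommGroup B) (_ : Module Λ B)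
    (f : N →ₗ[Λ] B) (g : B →ₗ[Λ] M), IsAlmostSplitSeq Λ f g

/-- `p : P → M` is a projective cover: `P` is projective, `p` is surjective and
`ker p` is superfluous in `P`. -/
structure IsProjCover {P M : Type u} [AddCommGroup P] [Module Λ P]
    [AddCommGroup M] [Module Λ M] (p : P →ₗ[Λ] M) : Prop where
  proj : Module.Projective Λ P
  surj : Function.Surjective p
  superfluous : ∀ N : Submodule Λ P, N ⊔ LinearMap.ker p = ⊤ → N = ⊤

/-- `e : M → I` is an injective envelope: `I` is injective, `e` is injective and
the image of `e` is essential in `I`. -/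
structure IsInjEnv {M I : Type u} [AddCommGroup M] [Module Λ M]
    [AddCommGroup I] [Module Λ I] (e : M →ₗ[Λ] I) : Prop where
  inj_obj : Module.Injective Λ I
  inj : Function.Injective e
  essential : ∀ N : Submodule Λ I, N ⊓ LinearMap.range e = ⊥ → N = ⊥

/-- `P₁ →α→ P₀ →π→ C → 0` is a minimal projective presentation. -/
structure IsMinProjPres {P₁ P₀ C : Type u} [AddCommGroup P₁] [Module Λ P₁]
    [AddCommGroup P₀] [Module Λ P₀] [AddCommGroup C] [Module Λ C]
    (α : P₁ →ₗ[Λ] P₀) (π : P₀ →ₗ[Λ] C) : Prop where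
  cover : IsProjCover Λ π
  proj₁ : Module.Projective Λ P₁
  exact : LinearMap.range α = LinearMap.ker π
  superfluous : ∀ N : Submodule Λ P₁, N ⊔ LinearMap.ker α = ⊤ → N = ⊤

/-- `f : A → B` is a minimal left almost split map in `mod Λ`. -/
def IsMinLeftAlmostSplit {A B : Type u} [AddCommGroup A] [Module Λ A]
    [AddCommGroup B] [Module Λ B] (f : A →ₗ[Λ] B) : Prop :=
  ¬ IsSplitMonoMod Λ f ∧
  (∀ (X : Type u) [AddCommGroup X] [Module Λ X], Module.Finite Λ X →
    ∀ u : A →ₗ[Λ] X, ¬ IsSplitMonoMod Λ u → ∃ w : B →ₗ[Λ] X, w ∘ₗ f = u) ∧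
  ∀ φ : B →ₗ[Λ] B, φ ∘ₗ f = f → Function.Bijective φ

/-- `g : C → D` is a minimal right almost split map in `mod Λ`. -/
def IsMinRightAlmostSplit {C D : Type u} [AddCommGroup C] [Module Λ C]
    [AddCommGroup D] [Module Λ D] (g : C →ₗ[Λ] D) : Prop :=
  ¬ IsSplitEpiMod Λ g ∧
  (∀ (X : Type u) [AddCommGroup X] [Module Λ X], Module.Finite Λ X →
    ∀ u : X →ₗ[Λ] D, ¬ IsSplitEpiMod Λ u → ∃ w : X →ₗ[Λ] C, g ∘ₗ w = u) ∧
  ∀ φ : C →ₗ[Λ] C, g ∘ₗ φ = g → Function.Bijective φ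

/-- The Jacobson radical of a module: the intersection of its maximal submodules. -/
def modRad (M : Type u) [AddCommGroup M] [Module Λ M] : Submodule Λ M :=
  sInf {N : Submodule Λ M | IsCoatom N}

/-- The socle of a module: the sum of its simple submodules. -/
def modSoc (M : Type u) [AddCommGroup M] [Module Λ M] : Submodule Λ M :=
  sSup {N : Submodule Λ M | IsAtom N}

/-- An object of the morphism category `H(Λ)`: a homomorphism `f : X → Y` of
`Λ`-modules. -/
structure HObj : Type (u + 1) where
  X : Type u
  Y : Type u
  [ax : AddCommGroup X]
  [mx : Module Λ X]
  [ay : AddCommGroup Y]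
  [my : Module Λ Y]
  f : X →ₗ[Λ] Y

attribute [instance] HObj.ax HObj.mx HObj.ay HObj.my

variable {Λ}

/-- The object of `H(Λ)` determined by a linear map. -/
def HObj.of {X Y : Type u} [AddCommGroup X] [Module Λ X] [AddCommGroup Y] [Module Λ Y]
    (f : X →ₗ[Λ] Y) : HObj Λ :=
  ⟨X, Y, f⟩

@[simp] lemma HObj.of_f {X Y : Type u} [AddCommGroup X] [Module Λ X] [AddCommGroup Y]
    [Module Λ Y] (f : X →ₗ[Λ] Y) : (HObj.of f).f = f := rfl

/-- The object `(0 → P)` of `H(Λ)`. -/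
def HObj.fromZero (P : Type u) [AddCommGroup P] [Module Λ P] : HObj Λ :=
  HObj.of (0 : PUnit.{u+1} →ₗ[Λ] P)

/-- The object `(P → 0)` of `H(Λ)`. -/
def HObj.toZero (P : Type u) [AddCommGroup P] [Module Λ P] : HObj Λ :=
  HObj.of (0 : P →ₗ[Λ] PUnit.{u+1})

/-- The object `(P →id→ P)` of `H(Λ)`. -/
def HObj.ofId (P : Type u) [AddCommGroup P] [Module Λ P] : HObj Λ :=
  HObj.of (LinearMap.id : P →ₗ[Λ] P)

/-- A morphism in the morphism category `H(Λ)`: a pair of linear maps giving a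
commutative square. -/
@[ext] structure HHom (M N : HObj Λ) where
  h₁ : M.X →ₗ[Λ] N.X
  h₂ : M.Y →ₗ[Λ] N.Y
  comm : N.f ∘ₗ h₁ = h₂ ∘ₗ M.f

/-- The identity morphism of `H(Λ)`. -/
def HHom.id (M : HObj Λ) : HHom M M :=
  ⟨LinearMap.id, LinearMap.id, by simp⟩

/-- Composition in `H(Λ)`. -/
def HHom.comp {M N P : HObj Λ} (g : HHom N P) (f : HHom M N) : HHom M P :=
  ⟨g.h₁ ∘ₗ f.h₁, g.h₂ ∘ₗ f.h₂, by
    ext x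
    have hg := LinearMap.congr_fun g.comm (f.h₁ x)
    have hf := LinearMap.congr_fun f.comm x
    simp only [LinearMap.comp_apply] at hg hf ⊢
    rw [hg, hf]⟩

/-- An object of `H(Λ)` lies in the morphism category of finitely generated
modules. -/
def HObj.Fin (M : HObj Λ) : Prop :=
  Module.Finite Λ M.X ∧ Module.Finite Λ M.Y

/-- Split epimorphisms in `H(Λ)`. -/
def IsSplitEpiH {M N : HObj Λ} (v : HHom M N) : Prop :=
  ∃ s : HHom N M, v.comp s = HHom.id N

/-- Split monomorphisms in `H(Λ)`. -/
def IsSplitMonoH {M N : HObj Λ} (u : HHom M N) : Prop :=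
  ∃ r : HHom N M, r.comp u = HHom.id M

/-- Direct sum in `H(Λ)`. -/
def HObj.dsum (M N : HObj Λ) : HObj Λ :=
  HObj.of (M.f.prodMap N.f)

/-- Isomorphism of objects of `H(Λ)`. -/
structure HIso (M N : HObj Λ) where
  e₁ : M.X ≃ₗ[Λ] N.X
  e₂ : M.Y ≃ₗ[Λ] N.Y
  comm : ∀ x, N.f (e₁ x) = e₂ (M.f x)

/-- An object of `H(Λ)` is indecomposable: it is nonzero, and in any way of writing
it as a direct sum of two subobjects, one of the two is zero. -/
def IsIndecH (M : HObj Λ) : Prop :=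
  (Nontrivial M.X ∨ Nontrivial M.Y) ∧
  ∀ (U₁ U₂ : Submodule Λ M.X) (V₁ V₂ : Submodule Λ M.Y),
    IsCompl U₁ U₂ → IsCompl V₁ V₂ →
    Submodule.map M.f U₁ ≤ V₁ → Submodule.map M.f U₂ ≤ V₂ →
    (U₁ = ⊥ ∧ V₁ = ⊥) ∨ (U₂ = ⊥ ∧ V₂ = ⊥)

/-- Projective objects of `H(Λ)` (lifting property against epimorphisms). -/
def IsProjH (M : HObj Λ) : Prop :=
  ∀ (B C : HObj Λ), B.Fin → C.Fin → ∀ v : HHom B C,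
    Function.Surjective v.h₁ → Function.Surjective v.h₂ →
    ∀ h : HHom M C, ∃ k : HHom M B, v.comp k = h

/-- Injective objects of `H(Λ)` (extension property along monomorphisms). -/
def IsInjH (M : HObj Λ) : Prop :=
  ∀ (A B : HObj Λ), A.Fin → B.Fin → ∀ u : HHom A B,
    Function.Injective u.h₁ → Function.Injective u.h₂ →
    ∀ h : HHom A M, ∃ k : HHom B M, k.comp u = h

/-- `0 → A →u→ B →v→ C → 0` is an almost split sequence in `H(Λ)`. -/
structure IsAlmostSplitSeqH {A B C : HObj Λ} (u : HHom A B) (v : HHom B C) : Prop where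
  finA : A.Fin
  finB : B.Fin
  finC : C.Fin
  inj₁ : Function.Injective u.h₁
  inj₂ : Function.Injective u.h₂
  surj₁ : Function.Surjective v.h₁
  surj₂ : Function.Surjective v.h₂
  exact₁ : LinearMap.range u.h₁ = LinearMap.ker v.h₁
  exact₂ : LinearMap.range u.h₂ = LinearMap.ker v.h₂
  not_split : ¬ IsSplitEpiH v
  indecA : IsIndecH A
  indecC : IsIndecH C
  lift : ∀ T : HObj Λ, T.Fin → ∀ h : HHom T C, ¬ IsSplitEpiH h →
    ∃ k : HHom T B, v.comp k = h

/-- `τ_H(X) ≅ Y`, expressed through the defining property of the Auslander-Reiten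
translation in `H(Λ)`: `Y` is the starting term of an almost split sequence in
`H(Λ)` ending at `X`. -/
def TauHRel (Y X : HObj Λ) : Prop :=
  ∃ (B : HObj Λ) (u : HHom Y B) (v : HHom B X), IsAlmostSplitSeqH u v

end Core


/-- Let `Λ` be an Artin algebra and `0 → A →f→ B →g→ C → 0` an almost
split sequence in `mod Λ`. Then `0 → (A →id→ A) → (A →f→ B) → (0 → C) → 0`, with left
map `(id_A, f)` and right map `(0, g)`, is an almost split sequence in `H(Λ)` ending
at `(0 → C)`. -/
theorem stmt_3
    (R : Type u) [CommRing R] [IsArtinianRing R]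
    (Λ : Type u) [Ring Λ] [Algebra R Λ] [Module.Finite R Λ]
    (A B C : Type u) [AddCommGroup A] [Module Λ A] [AddCommGroup B] [Module Λ B]
    [AddCommGroup C] [Module Λ C]
    (f : A →ₗ[Λ] B) (g : B →ₗ[Λ] C) (h : IsAlmostSplitSeq Λ f g) :
    IsAlmostSplitSeqH
      (A := HObj.ofId A) (B := HObj.of f) (C := HObj.fromZero C)
      ⟨LinearMap.id, f, by ext x; rfl⟩
      ⟨0, g, by
        ext x
        have : f x ∈ LinearMap.ker g := h.exact ▸ LinearMap.mem_range_self f x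
        exact (LinearMap.mem_ker.mp this).symm⟩ := by
  classical
  have einj := h.inj
  have hfe : ∀ y : LinearMap.range f, f ((LinearEquiv.ofInjective f einj).symm y) = y := by
    intro y
    conv_rhs => rw [← (LinearEquiv.ofInjective f einj).apply_symm_apply y]
    rw [LinearEquiv.ofInjective_apply]
  have hPUnit : ∀ N : Submodule Λ PUnit.{u+1}, N = ⊥ := by
    intro N
    ext x
    rw [Subsingleton.elim x (0 : PUnit.{u+1})]
    exact ⟨fun _ => Submodule.zero_mem _, fun _ => Submodule.zero_mem _⟩
  have hntA : Nontrivial A := h.indecA.1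
  have hntC : Nontrivial C := h.indecC.1
  refine ⟨⟨h.finA, h.finA⟩, ⟨h.finA, h.finB⟩,
    ⟨inferInstanceAs (Module.Finite Λ PUnit.{u+1}), h.finC⟩, ?_, h.inj, ?_, h.surj,
    ?_, h.exact, ?_, ?_, ?_, ?_⟩
  · exact fun a b hab => hab
  · intro x; exact ⟨0, Subsingleton.elim (α := PUnit.{u+1}) _ _⟩
  · ext x; simp; exact ⟨x, rfl⟩
  · rintro ⟨s, hs⟩
    exact h.not_split ⟨s.h₂, congrArg HHom.h₂ hs⟩
  · refine ⟨Or.inl hntA, ?_⟩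
    intro U₁ U₂ V₁ V₂ hU hV hm₁ hm₂
    have hm₁' : U₁ ≤ V₁ := fun x hx => hm₁ ⟨x, hx, rfl⟩
    have hm₂' : U₂ ≤ V₂ := fun x hx => hm₂ ⟨x, hx, rfl⟩
    have hbot : ¬ ((⊥ : Submodule Λ A) = ⊤) := by
      intro hcontra
      obtain ⟨x, hx⟩ := exists_ne (0 : A)
      have : x ∈ (⊥ : Submodule Λ A) := hcontra.symm ▸ Submodule.mem_top
      exact hx (by simpa using this)
    rcases h.indecA.2 U₁ U₂ hU with hu | hu
    · rcases h.indecA.2 V₁ V₂ hV with hv | hv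
      · exact Or.inl ⟨hu, hv⟩
      · have hu2 : U₂ = ⊥ := le_bot_iff.mp (hv ▸ hm₂')
        exact absurd (by have := hU.sup_eq_top; rw [hu, hu2] at this; exact (sup_idem (⊥ : Submodule Λ A)).symm.trans this) hbot
    · rcases h.indecA.2 V₁ V₂ hV with hv | hv
      · have hu1 : U₁ = ⊥ := le_bot_iff.mp (hv ▸ hm₁')
        exact absurd (by have := hU.sup_eq_top; rw [hu, hu1] at this; exact (sup_idem (⊥ : Submodule Λ A)).symm.trans this) hbot
      · exact Or.inr ⟨hu, hv⟩
  · refine ⟨Or.inr hntC, ?_⟩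
    intro U₁ U₂ V₁ V₂ hU hV hm₁ hm₂
    rcases h.indecC.2 V₁ V₂ hV with hv | hv
    · exact Or.inl ⟨hPUnit U₁, hv⟩
    · exact Or.inr ⟨hPUnit U₂, hv⟩
  · intro T hT hh hnot
    have hns : ¬ IsSplitEpiMod Λ hh.h₂ := by
      rintro ⟨s, hs⟩
      refine hnot ⟨⟨0, s, ?_⟩, ?_⟩
      · ext x; show T.f 0 = s 0; rw [map_zero, map_zero]
      · refine HHom.ext ?_ ?_
        · ext x; exact Subsingleton.elim (α := PUnit.{u+1}) _ _
        · exact hs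
    obtain ⟨k₂, hk₂⟩ := h.lift T.Y hT.2 hh.h₂ hns
    have hmem : ∀ x : T.X, k₂ (T.f x) ∈ LinearMap.range f := by
      intro x
      rw [h.exact, LinearMap.mem_ker]
      have h1 := LinearMap.congr_fun hk₂ (T.f x)
      have h2 := LinearMap.congr_fun hh.comm x
      simp only [LinearMap.comp_apply] at h1 h2
      exact h1.trans h2.symm
    refine ⟨⟨(LinearEquiv.ofInjective f einj).symm.toLinearMap ∘ₗ
        LinearMap.codRestrict (LinearMap.range f) (k₂ ∘ₗ T.f) hmem, k₂, ?_⟩, ?_⟩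
    · ext x
      simp only [LinearMap.comp_apply, LinearEquiv.coe_coe, HObj.of_f]
      exact hfe ⟨k₂ (T.f x), hmem x⟩
    · refine HHom.ext ?_ ?_
      · ext x; exact Subsingleton.elim (α := PUnit.{u+1}) _ _
      · exact hk₂
end

section
/- Let Λ be an Artin algebra and 0 → A →f→ B →g→ C → 0 an almost split sequence in mod Λ. Then the sequence 0 → (A → 0) → (B →g→ C) → (C →id→ C) → 0 in H(Λ), whose left map is the pair (f, 0) and whose right map is the pair (g, id_C), is an almost split sequence in H(Λ) ending at (C →id→ C). -/
universe u

/-- Let `Λ` be an Artin algebra and `0 → A →f→ B →g→ C → 0` an almost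
split sequence in `mod Λ`. Then `0 → (A → 0) → (B →g→ C) → (C →id→ C) → 0`, with left
map `(f, 0)` and right map `(g, id_C)`, is an almost split sequence in `H(Λ)` ending at
`(C →id→ C)`. -/
theorem stmt_4
    (R : Type u) [CommRing R] [IsArtinianRing R]
    (Λ : Type u) [Ring Λ] [Algebra R Λ] [Module.Finite R Λ]
    (A B C : Type u) [AddCommGroup A] [Module Λ A] [AddCommGroup B] [Module Λ B]
    [AddCommGroup C] [Module Λ C]
    (f : A →ₗ[Λ] B) (g : B →ₗ[Λ] C) (h : IsAlmostSplitSeq Λ f g) :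
    IsAlmostSplitSeqH
      (A := HObj.toZero A) (B := HObj.of g) (C := HObj.ofId C)
      ⟨f, 0, by
        ext x
        have : f x ∈ LinearMap.ker g := h.exact ▸ LinearMap.mem_range_self f x
        show g (f x) = 0
        exact LinearMap.mem_ker.mp this⟩
      ⟨g, LinearMap.id, by ext x; rfl⟩ := by
  have finPUnit : Module.Finite Λ PUnit.{u+1} :=
    Module.Finite.of_surjective (0 : Λ →ₗ[Λ] PUnit.{u+1})
      (fun x => ⟨0, Subsingleton.elim _ _⟩)
  have ntC : Nontrivial C := h.indecC.1
  haveI sP : Subsingleton ((HObj.toZero A : HObj Λ)).Y := inferInstanceAs (Subsingleton PUnit.{u+1})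
  constructor
  · exact ⟨h.finA, finPUnit⟩
  · exact ⟨h.finB, h.finC⟩
  · exact ⟨h.finC, h.finC⟩
  · exact h.inj
  · exact fun a b _ => Subsingleton.elim a b
  · exact h.surj
  · exact Function.surjective_id
  · exact h.exact
  · show LinearMap.range (0 : PUnit.{u+1} →ₗ[Λ] C) = LinearMap.ker (LinearMap.id : C →ₗ[Λ] C)
    rw [LinearMap.range_zero, LinearMap.ker_id]
  · rintro ⟨s, hs⟩
    exact h.not_split ⟨s.h₁, congrArg HHom.h₁ hs⟩
  · refine ⟨Or.inl h.indecA.1, fun U₁ U₂ V₁ V₂ hU hV _ _ => ?_⟩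
    have hV₁ : V₁ = ⊥ := (Submodule.eq_bot_iff V₁).mpr fun x _ => Subsingleton.elim x 0
    have hV₂ : V₂ = ⊥ := (Submodule.eq_bot_iff V₂).mpr fun x _ => Subsingleton.elim x 0
    rcases h.indecA.2 U₁ U₂ hU with h1 | h2
    · exact Or.inl ⟨h1, hV₁⟩
    · exact Or.inr ⟨h2, hV₂⟩
  · refine ⟨Or.inl ntC, fun U₁ U₂ V₁ V₂ hU hV m₁ m₂ => ?_⟩
    have m₁' : U₁ ≤ V₁ := fun x hx => m₁ (Submodule.mem_map.mpr ⟨x, hx, rfl⟩)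
    have m₂' : U₂ ≤ V₂ := fun x hx => m₂ (Submodule.mem_map.mpr ⟨x, hx, rfl⟩)
    have eq₁ : V₁ = U₁ := by
      have h1 : (U₁ ⊔ U₂) ⊓ V₁ = U₁ ⊔ (U₂ ⊓ V₁) := sup_inf_assoc_of_le U₂ m₁'
      rw [hU.codisjoint.eq_top] at h1; erw [top_inf_eq] at h1
      have h2 : U₂ ⊓ V₁ ≤ ⊥ := by
        have h3 : U₂ ⊓ V₁ ≤ V₂ ⊓ V₁ := inf_le_inf m₂' le_rfl
        rw [inf_comm V₂ V₁] at h3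
        exact h3.trans_eq hV.disjoint.eq_bot
      rw [le_bot_iff.mp h2, sup_bot_eq] at h1
      exact h1
    have eq₂ : V₂ = U₂ := by
      have h1 : (U₂ ⊔ U₁) ⊓ V₂ = U₂ ⊔ (U₁ ⊓ V₂) := sup_inf_assoc_of_le U₁ m₂'
      rw [sup_comm, hU.codisjoint.eq_top] at h1; erw [top_inf_eq] at h1
      have h2 : U₁ ⊓ V₂ ≤ ⊥ := by
        have h3 : U₁ ⊓ V₂ ≤ V₁ ⊓ V₂ := inf_le_inf m₁' le_rfl
        exact h3.trans_eq hV.disjoint.eq_bot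
      rw [le_bot_iff.mp h2, sup_bot_eq] at h1
      exact h1
    rcases h.indecC.2 U₁ U₂ hU with h1 | h2
    · exact Or.inl ⟨h1, eq₁.trans h1⟩
    · exact Or.inr ⟨h2, eq₂.trans h2⟩
  · intro T hT k hk
    have hcomm : k.h₁ = k.h₂ ∘ₗ T.f := by
      have hc := k.comm
      rw [show (HObj.ofId C).f = LinearMap.id from rfl] at hc; exact hc
    have notsplit₁ : ¬ IsSplitEpiMod Λ k.h₁ := by
      rintro ⟨s, hs⟩
      apply hk
      refine ⟨⟨s, T.f ∘ₗ s, (LinearMap.comp_id _).symm⟩, ?_⟩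
      have e2 : k.h₂ ∘ₗ (T.f ∘ₗ s) = LinearMap.id := by
        rw [← LinearMap.comp_assoc, ← hcomm]; exact hs
      exact HHom.ext hs e2
    obtain ⟨k₁, hk₁⟩ := h.lift T.X hT.1 k.h₁ notsplit₁
    refine ⟨⟨k₁, k.h₂, hk₁.trans hcomm⟩, HHom.ext hk₁ (LinearMap.id_comp _)⟩
end

section
/- Let Λ be an Artin algebra and let 0 → A →f→ B →g→ C → 0 and 0 → A' →f'→ B' →g'→ A → 0 be almost split sequences in mod Λ. Then the object (B' →f∘g'→ B) of H(Λ) is indecomposable. -/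
universe u

section Helpers

variable {Λ : Type u} [Ring Λ]

lemma factor_surj {M N P : Type u} [AddCommGroup M] [Module Λ M] [AddCommGroup N] [Module Λ N]
    [AddCommGroup P] [Module Λ P] (g : M →ₗ[Λ] N) (hg : Function.Surjective g)
    (u : M →ₗ[Λ] P) (hk : ∀ x, g x = 0 → u x = 0) :
    ∃ φ : N →ₗ[Λ] P, ∀ x, φ (g x) = u x := by
  have hle : LinearMap.ker g ≤ LinearMap.ker u := fun x hx => hk x hx
  refine ⟨((LinearMap.ker g).liftQ u hle) ∘ₗ
      (g.quotKerEquivOfSurjective hg).symm.toLinearMap, fun x => ?_⟩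
  have h1 : (g.quotKerEquivOfSurjective hg) ((LinearMap.ker g).mkQ x) = g x := by
    simp [LinearMap.quotKerEquivOfSurjective, LinearMap.quotKerEquivRange]
  have h2 : (g.quotKerEquivOfSurjective hg).symm (g x) = (LinearMap.ker g).mkQ x := by
    apply (g.quotKerEquivOfSurjective hg).injective; simpa using h1.symm
  simp [h2]

lemma factor_inj {M N : Type u} [AddCommGroup M] [Module Λ M] [AddCommGroup N] [Module Λ N]
    (f : M →ₗ[Λ] N) (hf : Function.Injective f) (u : M →ₗ[Λ] N)
    (hu : ∀ a, u a ∈ LinearMap.range f) :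
    ∃ ψ : M →ₗ[Λ] M, ∀ a, f (ψ a) = u a := by
  refine ⟨(LinearEquiv.ofInjective f hf).symm.toLinearMap ∘ₗ
      LinearMap.codRestrict (LinearMap.range f) u hu, fun a => ?_⟩
  have : ∀ b : M, ((LinearEquiv.ofInjective f hf) b : N) = f b := fun b => rfl
  rw [show f (((LinearEquiv.ofInjective f hf).symm.toLinearMap ∘ₗ
      LinearMap.codRestrict (LinearMap.range f) u hu) a) = _ from (this _).symm]
  simp

/-- An idempotent endomorphism of an indecomposable module is `0` or `id`. -/
lemma idem_zero_or_id {M : Type u} [AddCommGroup M] [Module Λ M]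
    (hM : IsIndecMod Λ M) (φ : M →ₗ[Λ] M) (hφ : ∀ x, φ (φ x) = φ x) :
    (∀ x, φ x = 0) ∨ (∀ x, φ x = x) := by
  have hcompl : IsCompl (LinearMap.ker φ) (LinearMap.range φ) := by
    constructor
    · rw [disjoint_iff_inf_le]
      rintro x ⟨hx1, y, rfl⟩
      have h : φ (φ y) = 0 := hx1
      simpa [hφ y] using h
    · rw [codisjoint_iff_le_sup]
      intro x _
      have h1 : x - φ x ∈ LinearMap.ker φ := by
        simp [LinearMap.mem_ker, map_sub, hφ x]
      have h2 : φ x ∈ LinearMap.range φ := ⟨x, rfl⟩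
      have hx : x = (x - φ x) + φ x := by abel
      rw [hx]; exact Submodule.add_mem_sup h1 h2
  rcases hM.2 _ _ hcompl with h | h
  · right
    intro x
    have hm : x - φ x ∈ LinearMap.ker φ := by simp [LinearMap.mem_ker, map_sub, hφ x]
    rw [h, Submodule.mem_bot] at hm
    have := sub_eq_zero.mp hm
    exact this.symm
  · left
    intro x
    have hm : φ x ∈ LinearMap.range φ := ⟨x, rfl⟩
    rw [h, Submodule.mem_bot] at hm
    exact hm

/-- A surjection whose kernel has a complement is a split epimorphism. -/
lemma split_of_compl {M N : Type u} [AddCommGroup M] [Module Λ M] [AddCommGroup N] [Module Λ N]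
    (g : M →ₗ[Λ] N) (hg : Function.Surjective g) (W : Submodule Λ M)
    (hW : IsCompl (LinearMap.ker g) W) : IsSplitEpiMod Λ g := by
  have hbij : Function.Bijective (g ∘ₗ W.subtype) := by
    constructor
    · rw [← LinearMap.ker_eq_bot, Submodule.eq_bot_iff]
      rintro ⟨x, hxW⟩ hx
      have hxk : x ∈ LinearMap.ker g := hx
      have hm : x ∈ LinearMap.ker g ⊓ W := ⟨hxk, hxW⟩
      rw [hW.inf_eq_bot] at hm
      simpa using hm
    · intro n
      obtain ⟨m, rfl⟩ := hg n
      have hm : m ∈ LinearMap.ker g ⊔ W := by rw [hW.sup_eq_top]; trivial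
      obtain ⟨k, hk, w, hw, rfl⟩ := Submodule.mem_sup.mp hm
      refine ⟨⟨w, hw⟩, ?_⟩
      simp [LinearMap.mem_ker.mp hk]
  set e := LinearEquiv.ofBijective (g ∘ₗ W.subtype) hbij
  refine ⟨W.subtype ∘ₗ e.symm.toLinearMap, ?_⟩
  apply LinearMap.ext
  intro n
  have h := e.apply_symm_apply n
  change g (W.subtype (e.symm n)) = n at h
  simp only [LinearMap.comp_apply, LinearMap.id_apply, LinearEquiv.coe_coe]
  exact h

/-- Key sub-lemma on the source side. -/
lemma side_left {A' B' A : Type u} [AddCommGroup A'] [Module Λ A'] [AddCommGroup B']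
    [Module Λ B'] [AddCommGroup A] [Module Λ A]
    (f' : A' →ₗ[Λ] B') (g' : B' →ₗ[Λ] A) (hd : IsAlmostSplitSeq Λ f' g')
    (U₁ U₂ : Submodule Λ B') (hU : IsCompl U₁ U₂) (hle : U₁ ≤ LinearMap.ker g') :
    U₁ = ⊥ := by
  set e := U₁.subtype ∘ₗ U₁.projectionOnto U₂ hU with he
  have heU : ∀ x, e x ∈ U₁ := fun x => (U₁.projectionOnto U₂ hU x).2
  have he1 : ∀ x ∈ U₁, e x = x := fun x hx => by
    simp [he, Submodule.projectionOnto_apply_of_mem_left hU hx]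
  have hrange : ∀ a, e (f' a) ∈ LinearMap.range f' := by
    intro a
    rw [hd.exact]
    exact hle (heU (f' a))
  obtain ⟨ψ, hψ⟩ := factor_inj f' hd.inj (e ∘ₗ f') hrange
  have hψ' : ∀ a, f' (ψ a) = e (f' a) := fun a => hψ a
  have hψidem : ∀ a, ψ (ψ a) = ψ a := by
    intro a
    apply hd.inj
    rw [hψ', hψ']
    exact he1 _ (heU _)
  rcases idem_zero_or_id hd.indecA ψ hψidem with h0 | h1
  · rw [Submodule.eq_bot_iff]
    intro x hx
    have hxr : x ∈ LinearMap.range f' := by rw [hd.exact]; exact hle hx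
    obtain ⟨a, rfl⟩ := hxr
    have h : e (f' a) = 0 := by rw [← hψ', h0, map_zero]
    rwa [he1 _ hx] at h
  · exfalso
    apply hd.not_split
    have hU1 : U₁ = LinearMap.ker g' := by
      apply le_antisymm hle
      intro x hx
      have hxr : x ∈ LinearMap.range f' := by rw [hd.exact]; exact hx
      obtain ⟨a, rfl⟩ := hxr
      have h : e (f' a) = f' a := by rw [← hψ', h1]
      rw [← h]
      exact heU _
    exact split_of_compl g' hd.surj U₂ (hU1 ▸ hU)

/-- Key sub-lemma on the target side. -/
lemma side_right {A B C : Type u} [AddCommGroup A] [Module Λ A] [AddCommGroup B]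
    [Module Λ B] [AddCommGroup C] [Module Λ C]
    (f : A →ₗ[Λ] B) (g : B →ₗ[Λ] C) (hd : IsAlmostSplitSeq Λ f g)
    (V₁ V₂ : Submodule Λ B) (hV : IsCompl V₁ V₂) (hle : LinearMap.range f ≤ V₂) :
    V₁ = ⊥ := by
  set p := V₁.subtype ∘ₗ V₁.projectionOnto V₂ hV with hp
  have hpV : ∀ x, p x ∈ V₁ := fun x => (V₁.projectionOnto V₂ hV x).2
  have hp1 : ∀ x ∈ V₁, p x = x := fun x hx => by
    simp [hp, Submodule.projectionOnto_apply_of_mem_left hV hx]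
  have hp2 : ∀ x ∈ V₂, p x = 0 := fun x hx => by
    simp [hp, Submodule.projectionOnto_apply_of_mem_right hV hx]
  have hker : ∀ x, g x = 0 → g (p x) = 0 := by
    intro x hx
    have hxr : x ∈ LinearMap.range f := by rw [hd.exact]; exact hx
    rw [hp2 x (hle hxr), map_zero]
  obtain ⟨φ, hφ⟩ := factor_surj g hd.surj (g ∘ₗ p) (fun x hx => hker x hx)
  have hφ' : ∀ x, φ (g x) = g (p x) := fun x => hφ x
  have hφidem : ∀ c, φ (φ c) = φ c := by
    intro c
    obtain ⟨x, rfl⟩ := hd.surj c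
    rw [hφ', hφ']
    rw [hp1 _ (hpV x)]
  rcases idem_zero_or_id hd.indecC φ hφidem with h0 | h1
  · rw [Submodule.eq_bot_iff]
    intro x hx
    have hgx : g x = 0 := by
      have h := hφ' x
      rw [h0, hp1 x hx] at h
      exact h.symm
    have hxV2 : x ∈ V₂ := hle (by rw [hd.exact]; exact hgx)
    have hm : x ∈ V₁ ⊓ V₂ := ⟨hx, hxV2⟩
    rwa [hV.inf_eq_bot, Submodule.mem_bot] at hm
  · exfalso
    apply hd.not_split
    have hV2 : V₂ = LinearMap.ker g := by
      apply le_antisymm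
      · intro x hx
        have h := hφ' x
        rw [h1, hp2 x hx, map_zero] at h
        exact LinearMap.mem_ker.mpr h
      · intro x hx
        rw [← hd.exact] at hx
        exact hle hx
    exact split_of_compl g hd.surj V₁ (hV2 ▸ hV.symm)


/-- Key decomposition lemma for `stmt_6`. -/
lemma key_decomp {A B C A' B' : Type u}
    [AddCommGroup A] [Module Λ A] [AddCommGroup B] [Module Λ B] [AddCommGroup C] [Module Λ C]
    [AddCommGroup A'] [Module Λ A'] [AddCommGroup B'] [Module Λ B']
    (f : A →ₗ[Λ] B) (g : B →ₗ[Λ] C) (f' : A' →ₗ[Λ] B') (g' : B' →ₗ[Λ] A)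
    (hδ : IsAlmostSplitSeq Λ f g) (hδ' : IsAlmostSplitSeq Λ f' g')
    (U₁ U₂ : Submodule Λ B') (V₁ V₂ : Submodule Λ B)
    (hU : IsCompl U₁ U₂) (hV : IsCompl V₁ V₂)
    (hm₁ : Submodule.map (f ∘ₗ g') U₁ ≤ V₁) (hm₂ : Submodule.map (f ∘ₗ g') U₂ ≤ V₂) :
    (U₁ = ⊥ ∧ V₁ = ⊥) ∨ (U₂ = ⊥ ∧ V₂ = ⊥) := by
  set h : B' →ₗ[Λ] B := f ∘ₗ g' with hh
  set e := U₁.subtype ∘ₗ U₁.projectionOnto U₂ hU with he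
  have heU : ∀ x, e x ∈ U₁ := fun x => (U₁.projectionOnto U₂ hU x).2
  have he1 : ∀ x ∈ U₁, e x = x := fun x hx => by
    simp [he, Submodule.projectionOnto_apply_of_mem_left hU hx]
  have he2 : ∀ x ∈ U₂, e x = 0 := fun x hx => by
    simp [he, Submodule.projectionOnto_apply_of_mem_right hU hx]
  set p := V₁.subtype ∘ₗ V₁.projectionOnto V₂ hV with hp
  have hpV : ∀ x, p x ∈ V₁ := fun x => (V₁.projectionOnto V₂ hV x).2
  have hp1 : ∀ x ∈ V₁, p x = x := fun x hx => by
    simp [hp, Submodule.projectionOnto_apply_of_mem_left hV hx]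
  have hp2 : ∀ x ∈ V₂, p x = 0 := fun x hx => by
    simp [hp, Submodule.projectionOnto_apply_of_mem_right hV hx]
  have hcomm : ∀ x, h (e x) = p (h x) := by
    intro x
    have hx : x ∈ U₁ ⊔ U₂ := by rw [hU.sup_eq_top]; trivial
    obtain ⟨u, hu, v, hv, rfl⟩ := Submodule.mem_sup.mp hx
    have h1 : h u ∈ V₁ := hm₁ ⟨u, hu, rfl⟩
    have h2 : h v ∈ V₂ := hm₂ ⟨v, hv, rfl⟩
    have l1 : e (u + v) = u := by rw [map_add, he1 u hu, he2 v hv, add_zero]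
    have l2 : p (h u + h v) = h u := by rw [map_add, hp1 _ h1, hp2 _ h2, add_zero]
    rw [l1, map_add, l2]
  have hker : ∀ x, g' x = 0 → g' (e x) = 0 := by
    intro x hx
    apply hδ.inj
    have hc : h (e x) = p (h x) := hcomm x
    simp only [hh, LinearMap.comp_apply] at hc
    rw [hc, hx]
    simp
  obtain ⟨φ, hφ⟩ := factor_surj g' hδ'.surj (g' ∘ₗ e) (fun x hx => hker x hx)
  have hφe : ∀ x, φ (g' x) = g' (e x) := fun x => hφ x
  have hφidem : ∀ a, φ (φ a) = φ a := by
    intro a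
    obtain ⟨x, rfl⟩ := hδ'.surj a
    rw [hφe, hφe, he1 _ (heU x)]
  have hpdecomp : ∀ b : B, p b = 0 → b ∈ V₂ := by
    intro b hb
    have hmem : b ∈ V₁ ⊔ V₂ := by rw [hV.sup_eq_top]; trivial
    obtain ⟨u, hu, v, hv, huv⟩ := Submodule.mem_sup.mp hmem
    have hpu : p b = u := by
      rw [← huv, map_add, hp1 _ hu, hp2 _ hv, add_zero]
    rw [hpu] at hb
    rw [← huv, hb, zero_add]
    exact hv
  rcases idem_zero_or_id hδ.indecA φ hφidem with h0 | h1
  · left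
    have hUle : U₁ ≤ LinearMap.ker g' := by
      intro x hx
      have hq := hφe x
      rw [h0, he1 x hx] at hq
      exact LinearMap.mem_ker.mpr hq.symm
    have hfle : LinearMap.range f ≤ V₂ := by
      rintro _ ⟨a, rfl⟩
      obtain ⟨x, rfl⟩ := hδ'.surj a
      have h2 : g' (e x) = 0 := by rw [← hφe, h0]
      have h3 : p (h x) = 0 := by
        rw [← hcomm x]
        simp only [hh, LinearMap.comp_apply, h2, map_zero]
      exact hpdecomp _ h3
    exact ⟨side_left f' g' hδ' U₁ U₂ hU hUle, side_right f g hδ V₁ V₂ hV hfle⟩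
  · right
    have hUle : U₂ ≤ LinearMap.ker g' := by
      intro x hx
      have hq := hφe x
      rw [h1, he2 x hx, map_zero] at hq
      exact LinearMap.mem_ker.mpr hq
    have hfle : LinearMap.range f ≤ V₁ := by
      rintro _ ⟨a, rfl⟩
      obtain ⟨x, rfl⟩ := hδ'.surj a
      have h2 : g' (e x) = g' x := by rw [← hφe, h1]
      have h3 : p (h x) = h x := by
        rw [← hcomm x]
        simp only [hh, LinearMap.comp_apply, h2]
      have h4 : f (g' x) = p (h x) := by rw [h3]; rfl
      rw [h4]
      exact hpV _
    exact ⟨side_left f' g' hδ' U₂ U₁ hU.symm hUle, side_right f g hδ V₂ V₁ hV.symm hfle⟩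

end Helpers



/-- Let `Λ` be an Artin algebra and let `0 → A →f→ B →g→ C → 0` and
`0 → A' →f'→ B' →g'→ A → 0` be almost split sequences in `mod Λ`. Then the object
`(B' →f∘g'→ B)` of `H(Λ)` is indecomposable. -/
theorem stmt_6
    (R : Type u) [CommRing R] [IsArtinianRing R]
    (Λ : Type u) [Ring Λ] [Algebra R Λ] [Module.Finite R Λ]
    (A B C A' B' : Type u)
    [AddCommGroup A] [Module Λ A] [AddCommGroup B] [Module Λ B] [AddCommGroup C] [Module Λ C]
    [AddCommGroup A'] [Module Λ A'] [AddCommGroup B'] [Module Λ B']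
    (f : A →ₗ[Λ] B) (g : B →ₗ[Λ] C) (f' : A' →ₗ[Λ] B') (g' : B' →ₗ[Λ] A)
    (hδ : IsAlmostSplitSeq Λ f g) (hδ' : IsAlmostSplitSeq Λ f' g') :
    IsIndecH (HObj.of (f ∘ₗ g')) := by
  classical
  constructor
  · left
    obtain ⟨x, y, hxy⟩ := hδ'.indecA.1
    exact ⟨⟨f' x, f' y, fun h => hxy (hδ'.inj h)⟩⟩
  · intro U₁ U₂ V₁ V₂ hU hV hm₁ hm₂
    exact key_decomp f g f' g' hδ hδ' U₁ U₂ V₁ V₂ hU hV hm₁ hm₂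
end

section
/- Let Λ be an Artin algebra, A an indecomposable non-projective Λ-module, and η : 0 → C →f→ B →g→ A → 0 an almost split sequence in mod Λ. Let p : P → A be the projective cover of A and e : C → I the injective envelope of C. Form the pullback of η along p, giving a short exact sequence 0 → C →s→ Z →l→ P → 0 and a map h : Z → B with h∘s = f and g∘h = p∘l, and form the pushout of η along e, giving a short exact sequence 0 → I →u→ X →v→ A → 0 and a map d : B → X with d∘f = u∘e and v∘d = g. Then 0 → (C →e→ I) → (Z →d∘h→ X) → (P →p→ A) → 0, with left map the pair (s, u) and right map the pair (l, v), is an almost split sequence in H(Λ) ending at (P →p→ A); in particular τ_H(P →p→ A) ≅ (C →e→ I). -/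
universe u

section Helpers

variable {Λ : Type u} [Ring Λ]

/-- Factor a linear map through a surjection whose kernel it kills. -/
lemma factor_surj_s8 {M N Q : Type u} [AddCommGroup M] [Module Λ M]
    [AddCommGroup N] [Module Λ N] [AddCommGroup Q] [Module Λ Q]
    (θ : M →ₗ[Λ] N) (ψ : M →ₗ[Λ] Q) (hθ : Function.Surjective θ)
    (hk : LinearMap.ker θ ≤ LinearMap.ker ψ) :
    ∃ ρ : N →ₗ[Λ] Q, ρ ∘ₗ θ = ψ := by
  have key : ∀ x y : M, θ x = θ y → ψ x = ψ y := by
    intro x y hxy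
    have hmem : x - y ∈ LinearMap.ker θ := by
      rw [LinearMap.mem_ker, map_sub, hxy, sub_self]
    have h2 := hk hmem
    rw [LinearMap.mem_ker, map_sub, sub_eq_zero] at h2
    exact h2
  choose σ hσ using hθ
  refine ⟨{ toFun := fun n => ψ (σ n), map_add' := ?_, map_smul' := ?_ }, ?_⟩
  · intro a b
    rw [← map_add ψ]
    exact key _ _ (by rw [hσ, map_add, hσ, hσ])
  · intro r a
    simp only [RingHom.id_apply]
    rw [← map_smul ψ]
    exact key _ _ (by rw [hσ, map_smul, hσ])
  · ext x
    exact key _ _ (hσ (θ x))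

/-- Lifting against a pullback square. -/
lemma pullback_lift {C B A P Z T : Type u}
    [AddCommGroup C] [Module Λ C] [AddCommGroup B] [Module Λ B]
    [AddCommGroup A] [Module Λ A] [AddCommGroup P] [Module Λ P]
    [AddCommGroup Z] [Module Λ Z] [AddCommGroup T] [Module Λ T]
    (f : C →ₗ[Λ] B) (g : B →ₗ[Λ] A) (hf : Function.Injective f)
    (hfg : LinearMap.range f = LinearMap.ker g)
    (p : P →ₗ[Λ] A)
    (s : C →ₗ[Λ] Z) (l : Z →ₗ[Λ] P) (h : Z →ₗ[Λ] B)
    (hl : Function.Surjective l) (hsl : LinearMap.range s = LinearMap.ker l)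
    (hhs : h ∘ₗ s = f) (hgh : g ∘ₗ h = p ∘ₗ l)
    (a : T →ₗ[Λ] P) (c : T →ₗ[Λ] B) (hac : ∀ x, p (a x) = g (c x)) :
    ∃ b : T →ₗ[Λ] Z, (∀ x, l (b x) = a x) ∧ (∀ x, h (b x) = c x) := by
  have hhs' : ∀ x, h (s x) = f x := fun x => LinearMap.congr_fun hhs x
  have hgh' : ∀ z, g (h z) = p (l z) := fun z => LinearMap.congr_fun hgh z
  have hls0 : ∀ c₀, l (s c₀) = 0 := by
    intro c₀
    have : s c₀ ∈ LinearMap.ker l := by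
      rw [← hsl]; exact LinearMap.mem_range_self s c₀
    exact LinearMap.mem_ker.mp this
  have uniq : ∀ z z' : Z, l z = l z' → h z = h z' → z = z' := by
    intro z z' h1 h2
    have hm : z - z' ∈ LinearMap.ker l := by
      rw [LinearMap.mem_ker, map_sub, h1, sub_self]
    rw [← hsl] at hm
    obtain ⟨c₀, hc₀⟩ := hm
    have hf0 : f c₀ = 0 := by
      have h3 := congrArg h hc₀
      rw [map_sub, h2, sub_self] at h3
      rw [← hhs' c₀, h3]
    have hc00 : c₀ = 0 := hf (by rw [hf0, map_zero])
    have : z - z' = 0 := by rw [← hc₀, hc00, map_zero]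
    exact sub_eq_zero.mp this
  have exz : ∀ x : T, ∃ z, l z = a x ∧ h z = c x := by
    intro x
    obtain ⟨z₀, hz₀⟩ := hl (a x)
    have hker : h z₀ - c x ∈ LinearMap.ker g := by
      rw [LinearMap.mem_ker, map_sub, hgh' z₀, hz₀, hac x, sub_self]
    rw [← hfg] at hker
    obtain ⟨c₀, hc₀⟩ := hker
    refine ⟨z₀ - s c₀, ?_, ?_⟩
    · rw [map_sub, hz₀, hls0, sub_zero]
    · rw [map_sub, hhs' c₀, hc₀]; abel
  choose b0 hb1 hb2 using exz
  refine ⟨{ toFun := b0, map_add' := ?_, map_smul' := ?_ }, hb1, hb2⟩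
  · intro x y
    apply uniq
    · rw [hb1, map_add, map_add, hb1, hb1]
    · rw [hb2, map_add, map_add, hb2, hb2]
  · intro r x
    simp only [RingHom.id_apply]
    apply uniq
    · rw [hb1, map_smul, map_smul, hb1]
    · rw [hb2, map_smul, map_smul, hb2]

end Helpers

/-- Let `Λ` be an Artin algebra, `A` an indecomposable non-projective
`Λ`-module and `η : 0 → C →f→ B →g→ A → 0` an almost split sequence in `mod Λ`. Let
`p : P → A` be the projective cover and `e : C → I` the injective envelope. The
pullback of `η` along `p` gives `0 → C →s→ Z →l→ P → 0` together with `h : Z → B`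
satisfying `h∘s = f` and `g∘h = p∘l`, and the pushout of `η` along `e` gives
`0 → I →u→ X →v→ A → 0` together with `d : B → X` satisfying `d∘f = u∘e` and `v∘d = g`.
Then `0 → (C →e→ I) →(s,u)→ (Z →d∘h→ X) →(l,v)→ (P →p→ A) → 0` is an almost split
sequence in `H(Λ)` ending at `(P →p→ A)`; in particular `τ_H(P →p→ A) ≅ (C →e→ I)`. -/
theorem stmt_8
    (R : Type u) [CommRing R] [IsArtinianRing R]
    (Λ : Type u) [Ring Λ] [Algebra R Λ] [Module.Finite R Λ]
    (A B C P I Z X : Type u)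
    [AddCommGroup A] [Module Λ A] [AddCommGroup B] [Module Λ B] [AddCommGroup C] [Module Λ C]
    [AddCommGroup P] [Module Λ P] [AddCommGroup I] [Module Λ I]
    [AddCommGroup Z] [Module Λ Z] [AddCommGroup X] [Module Λ X]
    [Module.Finite Λ P] [Module.Finite Λ I] [Module.Finite Λ Z] [Module.Finite Λ X]
    (hA : IsIndecMod Λ A) (hAnp : ¬ Module.Projective Λ A)
    (f : C →ₗ[Λ] B) (g : B →ₗ[Λ] A) (hη : IsAlmostSplitSeq Λ f g)
    (p : P →ₗ[Λ] A) (hp : IsProjCover Λ p)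
    (e : C →ₗ[Λ] I) (he : IsInjEnv Λ e)
    -- the pullback of `η` along `p`:
    (s : C →ₗ[Λ] Z) (l : Z →ₗ[Λ] P) (h : Z →ₗ[Λ] B)
    (hs_inj : Function.Injective s) (hl_surj : Function.Surjective l)
    (hsl : LinearMap.range s = LinearMap.ker l)
    (hhs : h ∘ₗ s = f) (hgh : g ∘ₗ h = p ∘ₗ l)
    -- the pushout of `η` along `e`:
    (u : I →ₗ[Λ] X) (v : X →ₗ[Λ] A) (d : B →ₗ[Λ] X)
    (hu_inj : Function.Injective u) (hv_surj : Function.Surjective v)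
    (huv : LinearMap.range u = LinearMap.ker v)
    (hdf : d ∘ₗ f = u ∘ₗ e) (hvd : v ∘ₗ d = g) :
    IsAlmostSplitSeqH
      (A := HObj.of e) (B := HObj.of (d ∘ₗ h)) (C := HObj.of p)
      ⟨s, u, by
        apply LinearMap.ext
        intro x
        have h1 := LinearMap.congr_fun hhs x
        have h2 := LinearMap.congr_fun hdf x
        show d (h (s x)) = u (e x)
        exact (congrArg d h1).trans h2⟩
      ⟨l, v, by
        apply LinearMap.ext
        intro z
        have h1 := LinearMap.congr_fun hvd (h z)
        have h2 := LinearMap.congr_fun hgh z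
        show p (l z) = v (d (h z))
        exact h2.symm.trans h1.symm⟩
    ∧ TauHRel (HObj.of e) (HObj.of p) := by
  classical
  -- pointwise versions of the commutation hypotheses
  have hvd' : ∀ b₀, v (d b₀) = g b₀ := fun b₀ => LinearMap.congr_fun hvd b₀
  have hdf' : ∀ c₀, d (f c₀) = u (e c₀) := fun c₀ => LinearMap.congr_fun hdf c₀
  have hgh' : ∀ z₀, g (h z₀) = p (l z₀) := fun z₀ => LinearMap.congr_fun hgh z₀
  have hvu0 : ∀ i₀, v (u i₀) = 0 := by
    intro i₀
    have : u i₀ ∈ LinearMap.ker v := by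
      rw [← huv]; exact LinearMap.mem_range_self u i₀
    exact LinearMap.mem_ker.mp this
  -- `d` is injective
  have hd0 : ∀ b₀, d b₀ = 0 → b₀ = 0 := by
    intro b₀ hb₀
    have hg0 : g b₀ = 0 := by rw [← hvd' b₀, hb₀, map_zero]
    have : b₀ ∈ LinearMap.range f := by rw [hη.exact]; exact LinearMap.mem_ker.mpr hg0
    obtain ⟨c₀, hc₀⟩ := this
    have hue : u (e c₀) = 0 := by rw [← hdf' c₀, hc₀, hb₀]
    have he0 : e c₀ = 0 := hu_inj (by rw [hue, map_zero])
    have hc00 : c₀ = 0 := he.inj (by rw [he0, map_zero])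
    rw [← hc₀, hc00, map_zero]
  -- extend `e` along `f` using injectivity of `I`
  obtain ⟨t₀, ht₀⟩ := he.inj_obj.out f hη.inj e
  -- the retraction `ρ : X → I` of `u` (pushout property)
  have hθsurj : Function.Surjective (LinearMap.coprod u d) := by
    intro x
    obtain ⟨b₀, hb₀⟩ := hη.surj (v x)
    have : x - d b₀ ∈ LinearMap.ker v := by
      rw [LinearMap.mem_ker, map_sub, hvd' b₀, hb₀, sub_self]
    rw [← huv] at this
    obtain ⟨i₀, hi₀⟩ := this
    exact ⟨(i₀, b₀), by simp only [LinearMap.coprod_apply, hi₀]; abel⟩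
  have hθker : LinearMap.ker (LinearMap.coprod u d) ≤
      LinearMap.ker (LinearMap.coprod (LinearMap.id : I →ₗ[Λ] I) t₀) := by
    rintro ⟨i₀, b₀⟩ hib
    rw [LinearMap.mem_ker, LinearMap.coprod_apply] at hib
    have hg0 : g b₀ = 0 := by
      rw [← hvd' b₀]
      have : v (u i₀ + d b₀) = 0 := by rw [hib, map_zero]
      rw [map_add, hvu0, zero_add] at this
      exact this
    have : b₀ ∈ LinearMap.range f := by rw [hη.exact]; exact LinearMap.mem_ker.mpr hg0
    obtain ⟨c₀, hc₀⟩ := this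
    have hui : u i₀ = -u (e c₀) := by
      have : u i₀ = -d b₀ := by
        rw [eq_neg_iff_add_eq_zero]; exact hib
      rw [this, ← hc₀, hdf' c₀]
    have hi₀ : i₀ = -e c₀ := hu_inj (by rw [hui, map_neg])
    rw [LinearMap.mem_ker, LinearMap.coprod_apply]
    simp only [LinearMap.id_apply]
    rw [hi₀, ← hc₀, ht₀]
    abel
  obtain ⟨ρ, hρ⟩ := factor_surj_s8 (LinearMap.coprod u d)
    (LinearMap.coprod (LinearMap.id : I →ₗ[Λ] I) t₀) hθsurj hθker
  have hρu : ∀ i₀, ρ (u i₀) = i₀ := by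
    intro i₀
    have := LinearMap.congr_fun hρ (i₀, 0)
    simpa using this
  have hρd : ∀ b₀, ρ (d b₀) = t₀ b₀ := by
    intro b₀
    have := LinearMap.congr_fun hρ (0, b₀)
    simpa using this
  -- the section `σ : A → X` of `v`
  have hσker : LinearMap.ker v ≤ LinearMap.ker (LinearMap.id - u ∘ₗ ρ) := by
    intro x hx
    rw [← huv] at hx
    obtain ⟨i₀, hi₀⟩ := hx
    rw [LinearMap.mem_ker, LinearMap.sub_apply, LinearMap.id_apply, LinearMap.comp_apply,
      ← hi₀, hρu, sub_self]
  obtain ⟨σ, hσ⟩ := factor_surj_s8 v (LinearMap.id - u ∘ₗ ρ) hv_surj hσker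
  have hσv : ∀ x, σ (v x) = x - u (ρ x) := by
    intro x
    have := LinearMap.congr_fun hσ x
    simpa using this
  have hvσ : ∀ a₀, v (σ a₀) = a₀ := by
    intro a₀
    obtain ⟨x, rfl⟩ := hv_surj a₀
    rw [hσv, map_sub, hvu0, sub_zero]
  have hd_dec : ∀ b₀, d b₀ = u (t₀ b₀) + σ (g b₀) := by
    intro b₀
    rw [← hvd' b₀, hσv (d b₀), hρd]
    abel
  -- the main structure
  have main : IsAlmostSplitSeqH
      (A := HObj.of e) (B := HObj.of (d ∘ₗ h)) (C := HObj.of p)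
      ⟨s, u, by
        apply LinearMap.ext
        intro x
        have h1 := LinearMap.congr_fun hhs x
        have h2 := LinearMap.congr_fun hdf x
        show d (h (s x)) = u (e x)
        exact (congrArg d h1).trans h2⟩
      ⟨l, v, by
        apply LinearMap.ext
        intro z
        have h1 := LinearMap.congr_fun hvd (h z)
        have h2 := LinearMap.congr_fun hgh z
        show p (l z) = v (d (h z))
        exact h2.symm.trans h1.symm⟩ := by
    refine { finA := ⟨hη.finA, (inferInstance : Module.Finite Λ I)⟩,
             finB := ⟨(inferInstance : Module.Finite Λ Z), (inferInstance : Module.Finite Λ X)⟩,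
             finC := ⟨(inferInstance : Module.Finite Λ P), hη.finC⟩,
             inj₁ := hs_inj, inj₂ := hu_inj, surj₁ := hl_surj, surj₂ := hv_surj,
             exact₁ := hsl, exact₂ := huv,
             not_split := ?_, indecA := ?_, indecC := ?_, lift := ?_ }
    · -- not split
      rintro ⟨q, hq⟩
      have hq1 : ∀ x : P, l (q.h₁ x) = x := by
        intro x
        have := congrArg HHom.h₁ hq
        exact LinearMap.congr_fun this x
      have hq2 : ∀ x : A, v (q.h₂ x) = x := by
        intro x
        have := congrArg HHom.h₂ hq
        exact LinearMap.congr_fun this x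
      have hqc : ∀ x : P, d (h (q.h₁ x)) = q.h₂ (p x) := by
        intro x
        exact LinearMap.congr_fun q.comm x
      have hker : LinearMap.ker p ≤ LinearMap.ker (h ∘ₗ q.h₁) := by
        intro x hx
        rw [LinearMap.mem_ker] at hx
        show h (q.h₁ x) = 0
        apply hd0
        exact (hqc x).trans (by rw [hx]; exact map_zero q.h₂)
      obtain ⟨w, hw⟩ := factor_surj_s8 p (h ∘ₗ q.h₁) hp.surj hker
      apply hη.not_split
      refine ⟨w, ?_⟩
      ext a₀
      obtain ⟨x, rfl⟩ := hp.surj a₀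
      have hw' : w (p x) = h (q.h₁ x) := LinearMap.congr_fun hw x
      simp only [LinearMap.comp_apply, LinearMap.id_apply]
      rw [hw', hgh' (q.h₁ x), hq1 x]
    · -- indecA : (C → I) is indecomposable
      refine ⟨Or.inl hη.indecA.1, ?_⟩
      intro U₁ U₂ V₁ V₂ hU hV h1 h2
      rcases hη.indecA.2 U₁ U₂ hU with hU1 | hU2
      · left
        refine ⟨hU1, ?_⟩
        have hre : LinearMap.range e ≤ V₂ := by
          rintro y ⟨c₀, rfl⟩
          have hU2top : U₂ = ⊤ := by rw [hU1] at hU; exact eq_top_of_bot_isCompl hU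
          have hc : c₀ ∈ U₂ := by rw [hU2top]; trivial
          exact h2 (Submodule.mem_map_of_mem hc)
        apply he.essential V₁
        apply le_bot_iff.mp
        calc V₁ ⊓ LinearMap.range e ≤ V₁ ⊓ V₂ := inf_le_inf_left _ hre
          _ = ⊥ := hV.inf_eq_bot
      · right
        refine ⟨hU2, ?_⟩
        have hre : LinearMap.range e ≤ V₁ := by
          rintro y ⟨c₀, rfl⟩
          have hU1top : U₁ = ⊤ := by rw [hU2] at hU; exact eq_top_of_isCompl_bot hU
          have hc : c₀ ∈ U₁ := by rw [hU1top]; trivial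
          exact h1 (Submodule.mem_map_of_mem hc)
        apply he.essential V₂
        apply le_bot_iff.mp
        calc V₂ ⊓ LinearMap.range e ≤ V₂ ⊓ V₁ := inf_le_inf_left _ hre
          _ = ⊥ := by rw [inf_comm]; exact hV.inf_eq_bot
    · -- indecC : (P → A) is indecomposable
      refine ⟨Or.inr hA.1, ?_⟩
      intro U₁ U₂ V₁ V₂ hU hV h1 h2
      rcases hA.2 V₁ V₂ hV with hV1 | hV2
      · left
        have hU1k : U₁ ≤ LinearMap.ker p := by
          intro x hx
          have : p x ∈ V₁ := h1 (Submodule.mem_map_of_mem hx)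
          rw [hV1] at this
          show p x = 0
          exact (Submodule.mem_bot Λ).mp this
        have hU2top : U₂ = ⊤ := by
          apply hp.superfluous
          apply eq_top_iff.mpr
          refine le_trans (le_of_eq hU.sup_eq_top.symm) ?_
          exact sup_le (le_trans hU1k le_sup_right) le_sup_left
        refine ⟨?_, hV1⟩
        rw [← hU.inf_eq_bot, hU2top, inf_top_eq]
      · right
        have hU2k : U₂ ≤ LinearMap.ker p := by
          intro x hx
          have : p x ∈ V₂ := h2 (Submodule.mem_map_of_mem hx)
          rw [hV2] at this
          show p x = 0
          exact (Submodule.mem_bot Λ).mp this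
        have hU1top : U₁ = ⊤ := by
          apply hp.superfluous
          apply eq_top_iff.mpr
          refine le_trans (le_of_eq hU.sup_eq_top.symm) ?_
          exact sup_le le_sup_left (le_trans hU2k le_sup_right)
        refine ⟨?_, hV2⟩
        rw [← hU.inf_eq_bot, hU1top, top_inf_eq]
    · -- the lifting property
      intro T hT a hns
      have hcomm : ∀ x, p (a.h₁ x) = a.h₂ (T.f x) := fun x => LinearMap.congr_fun a.comm x
      set K := LinearMap.ker T.f with hK
      set π := K.mkQ with hπ
      have hπsurj : Function.Surjective π := Submodule.mkQ_surjective K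
      set tb := K.liftQ T.f le_rfl with htb
      have htpi : ∀ x, tb (π x) = T.f x := fun x => rfl
      have htbinj : Function.Injective tb := by
        rw [← LinearMap.ker_eq_bot]
        exact Submodule.ker_liftQ_eq_bot K T.f le_rfl le_rfl
      -- `a.h₂ ∘ tb` is not a split epimorphism
      have hnsbar : ¬ IsSplitEpiMod Λ (a.h₂ ∘ₗ tb) := by
        rintro ⟨w, hw⟩
        have hw' : ∀ y : A, a.h₂ (tb (w y)) = y := fun y => LinearMap.congr_fun hw y
        apply hns
        haveI := hp.proj
        obtain ⟨r₀, hr₀⟩ := Module.projective_lifting_property π (w ∘ₗ p) hπsurj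
        have hr₀' : ∀ x, π (r₀ x) = w (p x) := fun x => LinearMap.congr_fun hr₀ x
        set φ : P →ₗ[Λ] P := a.h₁ ∘ₗ r₀ with hφ
        have hpφ : ∀ x, p (φ x) = p x := by
          intro x
          show p (a.h₁ (r₀ x)) = p x
          rw [hcomm (r₀ x), ← htpi (r₀ x), hr₀' x, hw' (p x)]
        have hφtop : LinearMap.range φ = ⊤ := by
          apply hp.superfluous
          rw [eq_top_iff]
          intro x _
          apply Submodule.mem_sup.mpr
          refine ⟨φ x, LinearMap.mem_range_self φ x, x - φ x, ?_, by abel⟩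
          rw [LinearMap.mem_ker, map_sub, hpφ x, sub_self]
        obtain ⟨ξ, hξ⟩ := Module.projective_lifting_property φ LinearMap.id
          (LinearMap.range_eq_top.mp hφtop)
        have hξ' : ∀ x, φ (ξ x) = x := fun x => LinearMap.congr_fun hξ x
        have hpξ : ∀ x, p (ξ x) = p x := by
          intro x
          have := hpφ (ξ x)
          rw [hξ' x] at this
          exact this.symm
        refine ⟨⟨r₀ ∘ₗ ξ, tb ∘ₗ w, ?_⟩, ?_⟩
        · apply LinearMap.ext
          intro x
          show T.f (r₀ (ξ x)) = tb (w (p x))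
          rw [← htpi (r₀ (ξ x)), hr₀' (ξ x), hpξ x]
        · apply HHom.ext
          · apply LinearMap.ext
            intro x
            show a.h₁ (r₀ (ξ x)) = x
            exact hξ' x
          · apply LinearMap.ext
            intro y
            show a.h₂ (tb (w y)) = y
            exact hw' y
      haveI := hT.1
      haveI : Module.Finite Λ (T.X ⧸ K) := Module.Finite.quotient Λ K
      obtain ⟨cb, hcb⟩ := hη.lift (T.X ⧸ K) inferInstance (a.h₂ ∘ₗ tb) hnsbar
      have hcb' : ∀ q, g (cb q) = a.h₂ (tb q) := fun q => LinearMap.congr_fun hcb q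
      set c := cb ∘ₗ π with hc
      have hgc : ∀ x, g (c x) = a.h₂ (T.f x) := by
        intro x
        show g (cb (π x)) = a.h₂ (T.f x)
        rw [hcb' (π x), htpi x]
      obtain ⟨j, hj⟩ := he.inj_obj.out tb htbinj (t₀ ∘ₗ cb)
      have hj' : ∀ q, j (tb q) = t₀ (cb q) := fun q => hj q
      obtain ⟨b₁, hb₁l, hb₁h⟩ := pullback_lift f g hη.inj hη.exact p s l h hl_surj hsl hhs hgh
        a.h₁ c (fun x => (hcomm x).trans (hgc x).symm)
      refine ⟨⟨b₁, σ ∘ₗ a.h₂ + u ∘ₗ j, ?_⟩, ?_⟩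
      · apply LinearMap.ext
        intro x
        show d (h (b₁ x)) = σ (a.h₂ (T.f x)) + u (j (T.f x))
        rw [hb₁h x, hd_dec (c x), hgc x]
        have : t₀ (c x) = j (T.f x) := by
          show t₀ (cb (π x)) = j (T.f x)
          rw [← htpi x, hj' (π x)]
        rw [this]
        abel
      · apply HHom.ext
        · apply LinearMap.ext
          intro x
          exact hb₁l x
        · apply LinearMap.ext
          intro y
          show v (σ (a.h₂ y) + u (j y)) = a.h₂ y
          exact (map_add v _ _).trans ((congrArg₂ (· + ·) (hvσ _) (hvu0 _)).trans (add_zero _))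
  exact ⟨main, ⟨HObj.of (d ∘ₗ h), _, _, main⟩⟩
end

section
/- Let Λ be an Artin algebra and P an indecomposable Λ-module that is both projective and injective, such that rad(P) is indecomposable and non-injective. Then the inclusion i : rad(P) → P is an injective envelope of rad(P), and (P →id→ P) is isomorphic to a direct summand of the middle term of the almost split sequence in H(Λ) starting at (rad(P) →i→ P). -/
universe u

section AuxProofs

open Function LinearMap

variable {Λ : Type u} [Ring Λ]

/-- Factoring a linear map through a surjection whose kernel it kills. -/
lemma aux_factor {M N K : Type u} [AddCommGroup M] [Module Λ M] [AddCommGroup N] [Module Λ N]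
    [AddCommGroup K] [Module Λ K] (v : M →ₗ[Λ] N) (hv : Function.Surjective v)
    (g : M →ₗ[Λ] K) (h : LinearMap.ker v ≤ LinearMap.ker g) :
    ∃ σ : N →ₗ[Λ] K, ∀ x, σ (v x) = g x := by
  let e := v.quotKerEquivOfSurjective hv
  refine ⟨(LinearMap.ker v).liftQ g h ∘ₗ (e.symm : N →ₗ[Λ] _), fun x => ?_⟩
  have he : e (Submodule.Quotient.mk x) = v x := rfl
  have hsymm : e.symm (v x) = Submodule.Quotient.mk x := by
    rw [← he, e.symm_apply_apply]
  simp [LinearMap.comp_apply, hsymm]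

/-- Fitting-type dichotomy: an endomorphism of an indecomposable f.g. module over an
Artin algebra is surjective or nilpotent. -/
lemma aux_fitting {R : Type u} [CommRing R] (Λ : Type u) [Ring Λ] [Algebra R Λ]
    {P : Type u} [AddCommGroup P] [Module Λ P] [Module R P] [IsScalarTower R Λ P]
    [Module.Finite R P] [IsArtinian Λ P]
    (hP : IsIndecMod Λ P) (ψ : P →ₗ[Λ] P) :
    Function.Surjective ψ ∨ ∃ n : ℕ, (ψ ^ n : P →ₗ[Λ] P) = 0 := by
  obtain ⟨n₀, hn₀⟩ := IsArtinian.monotone_stabilizes ψ.iterateRange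
  obtain ⟨n₁, hn₁⟩ := Filter.eventually_atTop.mp ψ.eventually_codisjoint_ker_pow_range_pow
  set n := n₀ + n₁ + 1 with hn
  have hstab : ∀ m, n ≤ m → LinearMap.range (ψ ^ n) = LinearMap.range (ψ ^ m) := by
    intro m hm
    have h1 : ψ.iterateRange n₀ = ψ.iterateRange n := hn₀ n (by omega)
    have h2 : ψ.iterateRange n₀ = ψ.iterateRange m := hn₀ m (by omega)
    exact (h1.symm.trans h2 : ψ.iterateRange n = ψ.iterateRange m)
  have hcod : Codisjoint (LinearMap.ker (ψ ^ n)) (LinearMap.range (ψ ^ n)) :=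
    hn₁ n (by omega)
  set W := LinearMap.range (ψ ^ n) with hW
  have hmapW : Submodule.map (ψ ^ n) W = W := by
    have h1 : (ψ ^ (n + n) : P →ₗ[Λ] P) = (ψ ^ n) ∘ₗ (ψ ^ n) := by
      rw [pow_add]; rfl
    have h2 : LinearMap.range ((ψ ^ n) ∘ₗ (ψ ^ n)) = Submodule.map (ψ ^ n) W :=
      LinearMap.range_comp _ _
    rw [← h2, ← h1]
    exact (hstab (n + n) (by omega)).symm
  have hmem : ∀ x ∈ W, (ψ ^ n) x ∈ W := fun x hx => hmapW ▸ Submodule.mem_map_of_mem hx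
  let ρ : W →ₗ[Λ] W := (ψ ^ n).restrict hmem
  have hρsurj : Function.Surjective ρ := by
    rintro ⟨y, hy⟩
    rw [← hmapW] at hy
    obtain ⟨x, hxW, hxy⟩ := Submodule.mem_map.mp hy
    exact ⟨⟨x, hxW⟩, Subtype.ext hxy⟩
  haveI : Module.Finite R ↥W := by
    have hc : ∀ x : P, (ψ ^ n) x ∈ W := fun x => LinearMap.mem_range_self _ x
    have hcs : Function.Surjective (LinearMap.codRestrict W (ψ ^ n) hc) := by
      rintro ⟨y, hy⟩
      obtain ⟨x, rfl⟩ := hy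
      exact ⟨x, rfl⟩
    exact Module.Finite.of_surjective ((LinearMap.codRestrict W (ψ ^ n) hc).restrictScalars R) hcs
  have hρinj : Function.Injective ρ :=
    OrzechProperty.injective_of_surjective_endomorphism (ρ.restrictScalars R) hρsurj
  have hdis : Disjoint (LinearMap.ker (ψ ^ n)) W := by
    rw [disjoint_iff, eq_bot_iff]
    rintro x ⟨hxk, hxW⟩
    have h0 : ρ ⟨x, hxW⟩ = 0 := by
      apply Subtype.ext
      simpa [ρ, LinearMap.restrict_apply] using hxk
    have := hρinj (h0.trans (map_zero ρ).symm)
    simp only [Submodule.mem_bot]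
    exact congrArg Subtype.val this
  rcases hP.2 _ _ ⟨hdis, hcod⟩ with hk | hr
  · left
    have hWtop : W = ⊤ := by
      have := codisjoint_iff.mp hcod
      rwa [hk, bot_sup_eq] at this
    intro y
    have hy : y ∈ W := hWtop ▸ Submodule.mem_top
    obtain ⟨x, rfl⟩ := hy
    refine ⟨(ψ ^ (n₀ + n₁)) x, ?_⟩
    have : (ψ ^ n : P →ₗ[Λ] P) = ψ ∘ₗ (ψ ^ (n₀ + n₁)) := by
      rw [hn, pow_succ']; rfl
    rw [this]; rfl
  · exact Or.inr ⟨n, LinearMap.range_eq_bot.mp hr⟩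

/-- Every proper submodule of an indecomposable f.g. projective module over an Artin
algebra is contained in the radical. -/
lemma aux_le_rad {R : Type u} [CommRing R] {Λ : Type u} [Ring Λ] [Algebra R Λ]
    {P : Type u} [AddCommGroup P] [Module Λ P] [Module R P] [IsScalarTower R Λ P]
    [Module.Finite R P] [IsArtinian Λ P]
    (hproj : Module.Projective Λ P) (hP : IsIndecMod Λ P)
    (N : Submodule Λ P) (hN : N ≠ ⊤) : N ≤ modRad Λ P := by
  refine le_sInf fun M hM => ?_
  by_contra hnle
  have hMN : M < N ⊔ M := lt_of_le_of_ne le_sup_right (fun h => hnle (by rw [h]; exact le_sup_left))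
  have hsup : N ⊔ M = ⊤ := hM.2 _ hMN
  have hsurj : Function.Surjective (M.mkQ ∘ₗ N.subtype) := by
    intro q
    obtain ⟨x, rfl⟩ := M.mkQ_surjective q
    have hx : x ∈ N ⊔ M := hsup ▸ Submodule.mem_top
    obtain ⟨a, ha, b, hb, rfl⟩ := Submodule.mem_sup.mp hx
    refine ⟨⟨a, ha⟩, ?_⟩
    simp only [LinearMap.comp_apply, Submodule.subtype_apply, Submodule.mkQ_apply]
    rw [Submodule.Quotient.mk_add]
    rw [(Submodule.Quotient.mk_eq_zero _).2 hb, add_zero]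
  haveI := hproj
  obtain ⟨φ, hφ⟩ := Module.projective_lifting_property (M.mkQ ∘ₗ N.subtype) M.mkQ hsurj
  set ψ : P →ₗ[Λ] P := N.subtype ∘ₗ φ with hψdef
  have hψ : M.mkQ ∘ₗ ψ = M.mkQ := by
    rw [hψdef, ← LinearMap.comp_assoc, hφ]
  have hψn : ∀ k : ℕ, M.mkQ ∘ₗ (ψ ^ k : P →ₗ[Λ] P) = M.mkQ := by
    intro k
    induction k with
    | zero => rfl
    | succ k ih =>
      have : (ψ ^ (k + 1) : P →ₗ[Λ] P) = (ψ ^ k) ∘ₗ ψ := by rw [pow_succ]; rfl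
      rw [this, ← LinearMap.comp_assoc, ih, hψ]
  rcases aux_fitting (R := R) Λ hP ψ with hs | ⟨n, hn⟩
  · refine hN (top_le_iff.mp fun x _ => ?_)
    obtain ⟨y, rfl⟩ := hs x
    exact (φ y).2
  · refine hM.1 (top_le_iff.mp fun x _ => ?_)
    have := LinearMap.congr_fun (hψn n) x
    rw [hn] at this
    have h0 : Submodule.Quotient.mk (p := M) x = 0 := by
      simpa using this.symm
    exact (Submodule.Quotient.mk_eq_zero _).1 h0

/-- The image of the radical is essential in an indecomposable Artinian module with
nonzero radical. -/
lemma aux_essential {P : Type u} [AddCommGroup P] [Module Λ P]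
    [IsArtinian Λ P] (hP : IsIndecMod Λ P) (hrad : Nontrivial ↥(modRad Λ P)) :
    ∀ N : Submodule Λ P, N ⊓ LinearMap.range (modRad Λ P).subtype = ⊥ → N = ⊥ := by
  intro N hN
  rw [Submodule.range_subtype] at hN
  by_contra hne
  haveI : IsAtomic (Submodule Λ P) :=
    isAtomic_of_orderBot_wellFounded_lt (IsWellFounded.wf)
  obtain ⟨S, hS, hSN⟩ := (IsAtomic.eq_bot_or_exists_atom_le N).resolve_left hne
  have hSrad : ¬ S ≤ modRad Λ P := by
    intro h
    refine hS.1 (le_bot_iff.mp ?_)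
    rw [← hN]
    exact le_inf hSN h
  obtain ⟨M, hM, hSM⟩ : ∃ M, IsCoatom M ∧ ¬ S ≤ M := by
    by_contra h
    push_neg at h
    exact hSrad (le_sInf fun M hM => h M hM)
  have hdis : S ⊓ M = ⊥ :=
    hS.2 _ (lt_of_le_of_ne inf_le_left fun h => hSM (by rw [← h]; exact inf_le_right))
  have hcod : S ⊔ M = ⊤ :=
    hM.2 _ (lt_of_le_of_ne le_sup_right fun h => hSM (by rw [h]; exact le_sup_left))
  rcases hP.2 S M ⟨disjoint_iff.mpr hdis, codisjoint_iff.mpr hcod⟩ with h | h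
  · exact hS.1 h
  · have hbot : modRad Λ P = ⊥ := le_bot_iff.mp (h ▸ sInf_le hM)
    rw [hbot] at hrad
    exact not_nontrivial _ hrad

/-- If the middle object of a morphism-category object retracts onto `P ⇒ P`, then
`P ⇒ P` is a direct summand. -/
lemma aux_summand {P : Type u} [AddCommGroup P] [Module Λ P]
    (B : HObj Λ) (w₂ : B.Y →ₗ[Λ] P) (s₁ : P →ₗ[Λ] B.X)
    (hsec : ∀ p : P, w₂ (B.f (s₁ p)) = p) :
    ∃ N : HObj Λ, Nonempty (HIso B ((HObj.ofId P).dsum N)) := by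
  set w₁ : B.X →ₗ[Λ] P := w₂ ∘ₗ B.f with hw₁def
  set s₂ : P →ₗ[Λ] B.Y := B.f ∘ₗ s₁ with hs₂def
  have hw₁s : ∀ p, w₁ (s₁ p) = p := hsec
  have hw₂s : ∀ p, w₂ (s₂ p) = p := hsec
  have hker : ∀ x ∈ LinearMap.ker w₁, B.f x ∈ LinearMap.ker w₂ := by
    intro x hx
    exact hx
  set N : HObj Λ := HObj.of (B.f.restrict hker) with hNdef
  have hm₁ : ∀ x : B.X, ((LinearMap.id : B.X →ₗ[Λ] B.X) - s₁ ∘ₗ w₁) x ∈ LinearMap.ker w₁ := by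
    intro x
    simp [LinearMap.mem_ker, LinearMap.sub_apply, map_sub, hw₁s]
  have hm₂ : ∀ y : B.Y, ((LinearMap.id : B.Y →ₗ[Λ] B.Y) - s₂ ∘ₗ w₂) y ∈ LinearMap.ker w₂ := by
    intro y
    simp [LinearMap.mem_ker, LinearMap.sub_apply, map_sub, hw₂s]
  let F₁ : B.X →ₗ[Λ] P × ↥(LinearMap.ker w₁) :=
    LinearMap.prod w₁ (LinearMap.codRestrict _ _ hm₁)
  let G₁ : P × ↥(LinearMap.ker w₁) →ₗ[Λ] B.X :=
    s₁ ∘ₗ LinearMap.fst Λ P ↥(LinearMap.ker w₁) +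
      (LinearMap.ker w₁).subtype ∘ₗ LinearMap.snd Λ P ↥(LinearMap.ker w₁)
  have hFG₁ : F₁ ∘ₗ G₁ = LinearMap.id := by
    apply LinearMap.ext
    rintro ⟨p, k, hk⟩
    have hk' : w₁ k = 0 := hk
    apply Prod.ext
    · simp [F₁, G₁, hw₁s, hk']
    · apply Subtype.ext
      simp [F₁, G₁, hw₁s, hk']
  have hGF₁ : G₁ ∘ₗ F₁ = LinearMap.id := by
    apply LinearMap.ext
    intro x
    simp [F₁, G₁]
  let F₂ : B.Y →ₗ[Λ] P × ↥(LinearMap.ker w₂) :=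
    LinearMap.prod w₂ (LinearMap.codRestrict _ _ hm₂)
  let G₂ : P × ↥(LinearMap.ker w₂) →ₗ[Λ] B.Y :=
    s₂ ∘ₗ LinearMap.fst Λ P ↥(LinearMap.ker w₂) +
      (LinearMap.ker w₂).subtype ∘ₗ LinearMap.snd Λ P ↥(LinearMap.ker w₂)
  have hFG₂ : F₂ ∘ₗ G₂ = LinearMap.id := by
    apply LinearMap.ext
    rintro ⟨p, k, hk⟩
    have hk' : w₂ k = 0 := hk
    apply Prod.ext
    · simp [F₂, G₂, hw₂s, hk']
    · apply Subtype.ext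
      simp [F₂, G₂, hw₂s, hk']
  have hGF₂ : G₂ ∘ₗ F₂ = LinearMap.id := by
    apply LinearMap.ext
    intro y
    simp [F₂, G₂]
  refine ⟨N, ⟨⟨LinearEquiv.ofLinear F₁ G₁ hFG₁ hGF₁, LinearEquiv.ofLinear F₂ G₂ hFG₂ hGF₂, ?_⟩⟩⟩
  intro x
  apply Prod.ext
  · show w₁ x = w₂ (B.f x)
    rfl
  · apply Subtype.ext
    show B.f (x - s₁ (w₁ x)) = B.f x - s₂ (w₂ (B.f x))
    rw [map_sub]
    rfl

end AuxProofs

/-- Let `Λ` be an Artin algebra and `P` an indecomposable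
projective-injective `Λ`-module such that `rad(P)` is indecomposable and
non-injective. Then the inclusion `i : rad(P) → P` is an injective envelope, and
`(P →id→ P)` is isomorphic to a direct summand of the middle term of the almost split
sequence in `H(Λ)` starting at `(rad(P) →i→ P)`. -/
theorem stmt_16
    (R : Type u) [CommRing R] [IsArtinianRing R]
    (Λ : Type u) [Ring Λ] [Algebra R Λ] [Module.Finite R Λ]
    (P : Type u) [AddCommGroup P] [Module Λ P] [Module.Finite Λ P]
    (hP : IsIndecMod Λ P) (hPproj : Module.Projective Λ P) (hPinj : Module.Injective Λ P)
    (hrad : IsIndecMod Λ ↥(modRad Λ P)) (hradni : ¬ Module.Injective Λ ↥(modRad Λ P)) :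
    IsInjEnv Λ (modRad Λ P).subtype ∧
    ∀ (𝔹 Cc : HObj Λ) (u : HHom (HObj.of (modRad Λ P).subtype) 𝔹) (v : HHom 𝔹 Cc),
      IsAlmostSplitSeqH u v →
      ∃ N : HObj Λ, Nonempty (HIso 𝔹 ((HObj.ofId P).dsum N)) := by
  classical
  letI : Module R P := Module.compHom P (algebraMap R Λ)
  haveI : IsScalarTower R Λ P := IsScalarTower.of_algebraMap_smul fun _ _ => rfl
  haveI : Module.Finite R P := Module.Finite.trans Λ P
  haveI : IsArtinian R P := isArtinian_of_fg_of_artinian'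
  haveI : IsArtinian Λ P := isArtinian_of_tower R inferInstance
  refine ⟨⟨hPinj, Submodule.injective_subtype _, aux_essential hP hrad.1⟩, ?_⟩
  intro B C u v hseq
  obtain ⟨w₂, hw₂⟩ := hPinj.out u.h₂ hseq.inj₂ LinearMap.id
  replace hw₂ : ∀ x, w₂ (u.h₂ x) = x := fun x => hw₂ x
  set w₁ : B.X →ₗ[Λ] P := w₂ ∘ₗ B.f with hw₁def
  have hu₁ : ∀ a : ↥(modRad Λ P), w₁ (u.h₁ a) = (a : P) := by
    intro a
    have h := LinearMap.congr_fun u.comm a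
    change B.f (u.h₁ a) = u.h₂ ((modRad Λ P).subtype a) at h
    rw [hw₁def]
    show w₂ (B.f (u.h₁ a)) = a
    rw [h]
    exact hw₂ _
  haveI := hPproj
  by_cases hs : Function.Surjective w₁
  · obtain ⟨s₁, hs₁⟩ := Module.projective_lifting_property w₁ LinearMap.id hs
    exact aux_summand B w₂ s₁ (fun p => LinearMap.congr_fun hs₁ p)
  · exfalso
    have hrange : LinearMap.range w₁ ≤ modRad Λ P := by
      refine aux_le_rad (R := R) hPproj hP _ (fun h => hs ?_)
      exact LinearMap.range_eq_top.mp h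
    set r₁ : B.X →ₗ[Λ] ↥(modRad Λ P) :=
      LinearMap.codRestrict _ w₁ (fun x => hrange ⟨x, rfl⟩) with hr₁def
    have hr₁u : ∀ a, r₁ (u.h₁ a) = a := fun a => Subtype.ext (hu₁ a)
    have hker₁ : LinearMap.ker v.h₁ ≤
        LinearMap.ker ((LinearMap.id : B.X →ₗ[Λ] B.X) - u.h₁ ∘ₗ r₁) := by
      intro x hx
      have hx' : x ∈ LinearMap.range u.h₁ := by rw [hseq.exact₁]; exact hx
      obtain ⟨a, rfl⟩ := hx'
      simp only [LinearMap.mem_ker, LinearMap.sub_apply, LinearMap.id_apply,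
        LinearMap.comp_apply]
      exact sub_eq_zero_of_eq (congrArg (fun t => u.h₁ t) (hr₁u a).symm)
    obtain ⟨σ₁, hσ₁⟩ := aux_factor v.h₁ hseq.surj₁ _ hker₁
    have hker₂ : LinearMap.ker v.h₂ ≤
        LinearMap.ker ((LinearMap.id : B.Y →ₗ[Λ] B.Y) - u.h₂ ∘ₗ w₂) := by
      intro y hy
      have hy' : y ∈ LinearMap.range u.h₂ := by rw [hseq.exact₂]; exact hy
      obtain ⟨p, rfl⟩ := hy'
      simp only [LinearMap.mem_ker, LinearMap.sub_apply, LinearMap.id_apply,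
        LinearMap.comp_apply]
      exact sub_eq_zero_of_eq (congrArg (fun t => u.h₂ t) (hw₂ p).symm)
    obtain ⟨σ₂, hσ₂⟩ := aux_factor v.h₂ hseq.surj₂ _ hker₂
    have hvu₁ : ∀ a, v.h₁ (u.h₁ a) = 0 := by
      intro a
      have : u.h₁ a ∈ LinearMap.ker v.h₁ := by
        rw [← hseq.exact₁]; exact LinearMap.mem_range_self _ a
      exact this
    have hvu₂ : ∀ p, v.h₂ (u.h₂ p) = 0 := by
      intro p
      have : u.h₂ p ∈ LinearMap.ker v.h₂ := by
        rw [← hseq.exact₂]; exact LinearMap.mem_range_self _ p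
      exact this
    have hcomm : B.f ∘ₗ σ₁ = σ₂ ∘ₗ C.f := by
      apply LinearMap.ext
      intro c
      obtain ⟨x, rfl⟩ := hseq.surj₁ c
      have hv := LinearMap.congr_fun v.comm x
      simp only [LinearMap.comp_apply] at hv ⊢
      rw [hσ₁, hv, hσ₂]
      have hu := LinearMap.congr_fun u.comm (r₁ x)
      change B.f (u.h₁ (r₁ x)) = u.h₂ ((modRad Λ P).subtype (r₁ x)) at hu
      simp only [LinearMap.sub_apply, LinearMap.id_apply, LinearMap.comp_apply, map_sub]
      have h2 : B.f (u.h₁ (r₁ x)) = u.h₂ (w₂ (B.f x)) := hu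
      exact congrArg (fun t => B.f x - t) h2
    refine hseq.not_split ⟨⟨σ₁, σ₂, hcomm⟩, ?_⟩
    have hc₁ : v.h₁ ∘ₗ σ₁ = LinearMap.id := by
      apply LinearMap.ext
      intro c
      obtain ⟨x, rfl⟩ := hseq.surj₁ c
      simp only [LinearMap.comp_apply, LinearMap.id_apply]
      rw [hσ₁]
      simp [LinearMap.sub_apply, hvu₁]
      exact hvu₁ (r₁ x)
    have hc₂ : v.h₂ ∘ₗ σ₂ = LinearMap.id := by
      apply LinearMap.ext
      intro c
      obtain ⟨y, rfl⟩ := hseq.surj₂ c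
      simp only [LinearMap.comp_apply, LinearMap.id_apply]
      rw [hσ₂]
      simp [LinearMap.sub_apply, hvu₂]
      exact hvu₂ (w₂ y)
    show HHom.comp v ⟨σ₁, σ₂, hcomm⟩ = HHom.id C
    apply HHom.ext
    · exact hc₁
    · exact hc₂
end
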